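/- For every election system E satisfying Property Unique-α, the set E-DC-PC-TE-UW equals B_E = {(C,V,p) : p ∈ C and p is not the unique winner of the E election (C,V)}; moreover, for each (C,V,p) ∈ B_E, the partition (∅, C) is a successful solution. -/
import Mathlib


/-- Ties-eliminate survivor set for election system `E`: the winner set of `C'`
if it has exactly one element, else the empty set. -/
def uwIfAny {α : Type*} (E : Finset α → Finset α) (C' : Finset α) : Finset α :=
  if (E C').card = 1 then E C' else ∅

/-- for every election system `E` satisfying Property Unique-α
(with `E ∅ = ∅`), the set `E`-DC-PC-TE-UW equals
`B_E = {(C,V,p) : p ∈ C and p is not the unique winner of (C,V)}`; moreover for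
each member of `B_E` the partition `(∅, C)` is a successful solution.  Success of
partition `(C₁,C₂)` means `p` is not the unique winner of the two-stage process,
i.e. the winner set of the final round `(uwIfAny E C₁ ∪ C₂, V)` is not `{p}`
(note `p` being eliminated in round one also yields this, since then `p` is not
in the final candidate set). -/
theorem dc_pc_te_uw_eq_B {α : Type*} [DecidableEq α]
    (E : Finset α → Finset α) (hE : ∀ C' : Finset α, E C' ⊆ C')
    (hα : ∀ (C C' : Finset α) (p : α), E C = {p} → p ∈ C' → C' ⊆ C → E C' = {p})
    (hempty : E ∅ = ∅)
    (C : Finset α) (p : α) (hp : p ∈ C) :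
    ((∃ C₁ C₂ : Finset α, C₁ ∪ C₂ = C ∧ C₁ ∩ C₂ = ∅ ∧
        E (uwIfAny E C₁ ∪ C₂) ≠ {p}) ↔ E C ≠ {p}) ∧
    (E C ≠ {p} → E (uwIfAny E (∅ : Finset α) ∪ C) ≠ {p}) := by
  have huw : uwIfAny E (∅ : Finset α) = ∅ := by
    simp [uwIfAny, hempty]
  have h2 : E C ≠ {p} → E (uwIfAny E (∅ : Finset α) ∪ C) ≠ {p} := by
    intro h; simpa [huw] using h
  refine ⟨⟨?_, fun h => ⟨∅, C, by simp, by simp, h2 h⟩⟩, h2⟩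
  rintro ⟨C₁, C₂, hun, hdisj, hne⟩ hEC
  apply hne
  have hsub : uwIfAny E C₁ ∪ C₂ ⊆ C := by
    apply Finset.union_subset
    · unfold uwIfAny
      split
      · exact (hE C₁).trans (hun ▸ Finset.subset_union_left)
      · simp
    · exact hun ▸ Finset.subset_union_right
  have hpmem : p ∈ uwIfAny E C₁ ∪ C₂ := by
    rcases Finset.mem_union.mp (hun ▸ hp) with h1 | h2
    · have : E C₁ = {p} := hα C C₁ p hEC h1 (hun ▸ Finset.subset_union_left)
      have : uwIfAny E C₁ = {p} := by simp [uwIfAny, this]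
      exact Finset.mem_union_left _ (by simp [this])
    · exact Finset.mem_union_right _ h2
  exact hα C _ p hEC hpmem hsub
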